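/- arXiv:2211.16766 — 2 statements merged into one kernel-verified Lean document; each statement's English description precedes it below -/
import Mathlib

section
/- Let n ≥ 2, let a be a non-constant binary sequence of period n, and let a^{(τ)} denote its cyclic shift by τ for 1 ≤ τ ≤ n-1 with a^{(τ)} ≠ a. Then 1 ≤ |σ(a) - σ(a^{(τ)})| ≤ 2^n - 3 and 1 ≤ w₂(|σ(a) - σ(a^{(τ)})|) ≤ n - 1. -/
def w2 (a : ℕ) : ℕ := (Nat.digits 2 a).sum

def sigma (n : ℕ) (a : ℕ → ℕ) : ℕ := ∑ l ∈ Finset.range n, a l * 2 ^ l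

-- geometric sum
lemma two_pow_sum (n : ℕ) : ∑ l ∈ Finset.range n, 2 ^ l = 2 ^ n - 1 := by
  induction n with
  | zero => simp
  | succ k ih =>
    rw [Finset.sum_range_succ, ih]
    have : 1 ≤ 2 ^ k := Nat.one_le_two_pow
    ring_nf
    omega

lemma sigma_le (n : ℕ) (a : ℕ → ℕ) (hbin : ∀ l, a l ≤ 1)
    (l0 : ℕ) (hl0 : l0 < n) (h0 : a l0 = 0) : sigma n a ≤ 2 ^ n - 2 := by
  have hmem : l0 ∈ Finset.range n := Finset.mem_range.mpr hl0
  have h1 : sigma n a = ∑ l ∈ (Finset.range n).erase l0, a l * 2 ^ l :=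
    (Finset.sum_erase _ (by simp [h0])).symm
  have h2 : ∑ l ∈ (Finset.range n).erase l0, a l * 2 ^ l ≤
      ∑ l ∈ (Finset.range n).erase l0, 2 ^ l := by
    apply Finset.sum_le_sum
    intro i _
    have := hbin i
    nlinarith [Nat.one_le_two_pow (n := i)]
  have h3 : ∑ l ∈ (Finset.range n).erase l0, 2 ^ l + 2 ^ l0 = 2 ^ n - 1 := by
    rw [Finset.sum_erase_add _ _ hmem, two_pow_sum]
  have h4 : 1 ≤ 2 ^ l0 := Nat.one_le_two_pow
  have h5 : 2 ^ l0 < 2 ^ n := Nat.pow_lt_pow_right (by norm_num) hl0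
  omega

lemma sigma_ge (n : ℕ) (a : ℕ → ℕ)
    (l0 : ℕ) (hl0 : l0 < n) (h0 : a l0 ≠ 0) : 1 ≤ sigma n a := by
  have hmem : l0 ∈ Finset.range n := Finset.mem_range.mpr hl0
  have : a l0 * 2 ^ l0 ≤ sigma n a :=
    Finset.single_le_sum (f := fun l => a l * 2 ^ l) (fun i _ => Nat.zero_le _) hmem
  have h4 : 1 ≤ 2 ^ l0 := Nat.one_le_two_pow
  have : 1 ≤ a l0 := Nat.one_le_iff_ne_zero.mpr h0
  nlinarith

lemma sigma_inj : ∀ (n : ℕ) (a b : ℕ → ℕ), (∀ l, a l ≤ 1) → (∀ l, b l ≤ 1) →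
    sigma n a = sigma n b → ∀ l < n, a l = b l := by
  intro n
  induction n with
  | zero => intro a b _ _ _ l hl; omega
  | succ k ih =>
    intro a b ha hb heq l hl
    have expand : ∀ c : ℕ → ℕ, sigma (k+1) c = c 0 + 2 * sigma k (fun l => c (l+1)) := by
      intro c
      have hterm : ∀ i ∈ Finset.range k, c (i+1) * 2 ^ (i+1) = 2 * (c (i+1) * 2 ^ i) := by
        intro i _; ring
      rw [sigma, Finset.sum_range_succ', Finset.sum_congr rfl hterm, ← Finset.mul_sum]
      simp [sigma]
      ring
    rw [expand a, expand b] at heq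
    have h0 : a 0 = b 0 := by have := ha 0; have := hb 0; omega
    have h1 : sigma k (fun l => a (l+1)) = sigma k (fun l => b (l+1)) := by omega
    rcases Nat.eq_zero_or_pos l with rfl | hpos
    · exact h0
    · obtain ⟨m, rfl⟩ := Nat.exists_eq_add_of_le hpos
      have := ih (fun l => a (l+1)) (fun l => b (l+1)) (fun l => ha _) (fun l => hb _) h1 m (by omega)
      simpa [Nat.add_comm] using this

lemma sum_le_length : ∀ (L : List ℕ), (∀ x ∈ L, x ≤ 1) → L.sum ≤ L.length := by
  intro L
  induction L with
  | nil => simp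
  | cons x t ih =>
    intro h
    simp only [List.sum_cons, List.length_cons]
    have := h x (by simp)
    have := ih (fun y hy => h y (by simp [hy]))
    omega

lemma ofDigits_all_ones : ∀ (L : List ℕ), (∀ x ∈ L, x ≤ 1) → L.sum = L.length →
    Nat.ofDigits 2 L = 2 ^ L.length - 1 := by
  intro L
  induction L with
  | nil => simp
  | cons x t ih =>
    intro h hsum
    simp only [List.sum_cons, List.length_cons] at hsum
    have hx := h x (by simp)
    have ht := sum_le_length t (fun y hy => h y (by simp [hy]))
    have hx1 : x = 1 := by omega
    have htsum : t.sum = t.length := by omega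
    rw [Nat.ofDigits_cons, ih (fun y hy => h y (by simp [hy])) htsum, hx1]
    have : 1 ≤ 2 ^ t.length := Nat.one_le_two_pow
    simp [List.length_cons, pow_succ]
    omega

lemma ofDigits_sum_zero : ∀ (L : List ℕ), L.sum = 0 → Nat.ofDigits 2 L = 0 := by
  intro L
  induction L with
  | nil => simp
  | cons x t ih =>
    intro h
    simp only [List.sum_cons] at h
    rw [Nat.ofDigits_cons, ih (by omega)]
    omega

theorem sigma_diff_bounds (n : ℕ) (hn : 2 ≤ n) (a : ℕ → ℕ)
    (hbin : ∀ l, a l ≤ 1) (hper : ∀ l, a (l + n) = a l)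
    (hnz : ∃ l < n, a l ≠ 0) (hno : ∃ l < n, a l ≠ 1)
    (τ : ℕ) (hτ1 : 1 ≤ τ) (hτ2 : τ ≤ n - 1)
    (hne : ∃ l < n, a (l + τ) ≠ a l) :
    (1 ≤ ((sigma n a : ℤ) - sigma n (fun l => a (l + τ))).natAbs ∧
      ((sigma n a : ℤ) - sigma n (fun l => a (l + τ))).natAbs ≤ 2 ^ n - 3) ∧
    1 ≤ w2 ((sigma n a : ℤ) - sigma n (fun l => a (l + τ))).natAbs ∧
      w2 ((sigma n a : ℤ) - sigma n (fun l => a (l + τ))).natAbs ≤ n - 1 := by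
  have hnpos : 0 < n := by omega
  -- periodicity mod n
  have hk : ∀ k l, a (l + k * n) = a l := by
    intro k
    induction k with
    | zero => simp
    | succ m ih =>
      intro l
      have : l + (m+1) * n = (l + m * n) + n := by ring
      rw [this, hper, ih]
  have hmod : ∀ m, a m = a (m % n) := by
    intro m
    conv_lhs => rw [← Nat.mod_add_div' m n]
    exact hk (m / n) (m % n)
  set b : ℕ → ℕ := fun l => a (l + τ) with hb
  have hbbin : ∀ l, b l ≤ 1 := fun l => hbin _
  -- shift witnesses
  have shiftwit : ∀ l0 < n, ∃ l < n, b l = a l0 := by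
    intro l0 hl0
    refine ⟨(l0 + (n - τ)) % n, Nat.mod_lt _ hnpos, ?_⟩
    have hτn : τ ≤ n := by omega
    have : ((l0 + (n - τ)) % n + τ) % n = l0 % n := by
      rw [Nat.mod_add_mod]
      have : l0 + (n - τ) + τ = l0 + n := by omega
      rw [this, Nat.add_mod_right]
    calc b ((l0 + (n - τ)) % n) = a (((l0 + (n - τ)) % n + τ) % n) := hmod _
      _ = a (l0 % n) := by rw [this]
      _ = a l0 := (hmod l0).symm
  obtain ⟨l1, hl1, hl1'⟩ := hnz
  obtain ⟨l2, hl2, hl2'⟩ := hno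
  have hl2'' : a l2 = 0 := by have := hbin l2; omega
  obtain ⟨m1, hm1, hm1'⟩ := shiftwit l1 hl1
  obtain ⟨m2, hm2, hm2'⟩ := shiftwit l2 hl2
  set S := sigma n a with hS
  set T := sigma n b with hT
  have hS1 : 1 ≤ S := sigma_ge n a l1 hl1 hl1'
  have hS2 : S ≤ 2 ^ n - 2 := sigma_le n a hbin l2 hl2 hl2''
  have hT1 : 1 ≤ T := sigma_ge n b m1 hm1 (by rw [hm1']; exact hl1')
  have hT2 : T ≤ 2 ^ n - 2 := sigma_le n b hbbin m2 hm2 (by rw [hm2']; exact hl2'')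
  have hST : S ≠ T := by
    intro h
    obtain ⟨l, hl, hlne⟩ := hne
    exact hlne (sigma_inj n b a hbbin hbin h.symm l hl)
  have hpow : 4 ≤ 2 ^ n := by
    calc (4:ℕ) = 2 ^ 2 := rfl
    _ ≤ 2 ^ n := Nat.pow_le_pow_right (by norm_num) hn
  set d := ((S : ℤ) - T).natAbs with hd
  have hd1 : 1 ≤ d := by omega
  have hd2 : d ≤ 2 ^ n - 3 := by omega
  refine ⟨⟨hd1, hd2⟩, ?_, ?_⟩
  · -- w2 d ≥ 1
    by_contra h
    have hsum : (Nat.digits 2 d).sum = 0 := by unfold w2 at h; omega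
    have := ofDigits_sum_zero _ hsum
    rw [Nat.ofDigits_digits] at this
    omega
  · -- w2 d ≤ n - 1
    have hdlt : d < 2 ^ n := by omega
    have hlen : (Nat.digits 2 d).length ≤ n := by
      rw [Nat.digits_len 2 d (by norm_num) (by omega)]
      have : Nat.log 2 d < n := Nat.log_lt_of_lt_pow (by omega) hdlt
      omega
    have hdig : ∀ x ∈ Nat.digits 2 d, x ≤ 1 := by
      intro x hx
      have := Nat.digits_lt_base (by norm_num) hx
      omega
    have hsumle : (Nat.digits 2 d).sum ≤ (Nat.digits 2 d).length := sum_le_length _ hdig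
    by_contra h
    push_neg at h
    have hsum_eq : (Nat.digits 2 d).sum = (Nat.digits 2 d).length := by
      unfold w2 at h; omega
    have := ofDigits_all_ones _ hdig hsum_eq
    rw [Nat.ofDigits_digits] at this
    have hlen_eq : (Nat.digits 2 d).length = n := by
      unfold w2 at h; omega
    rw [hlen_eq] at this
    omega
end

section
/- Let a, b be distinct binary sequences of period n ≥ 2, and define for each cyclic shift t the quantity A(M^{(t)}) = n - 2w₂(|σ(a^{(t)}) - σ(b^{(t)})|) if σ(a^{(t)}) > σ(b^{(t)}), and A(M^{(t)}) = 2w₂(|σ(a^{(t)}) - σ(b^{(t)})|) - n otherwise, where σ(c^{(t)}) = Σ_{λ=0}^{n-1} c_{λ+t} 2^λ. Then A(M^{(t)}) = A(M^{(0)}) for all 0 ≤ t ≤ n-1 (shift invariance). -/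
/-- A(M^{(t)}) for the matrix with rows the t-shifts of a and b -/
def AM (n : ℕ) (a b : ℕ → ℕ) (t : ℕ) : ℤ :=
  if sigma n (fun l => a (l + t)) > sigma n (fun l => b (l + t)) then
    (n : ℤ) - 2 * w2 (sigma n (fun l => a (l + t)) - sigma n (fun l => b (l + t)))
  else
    2 * w2 (sigma n (fun l => b (l + t)) - sigma n (fun l => a (l + t))) - (n : ℤ)

lemma w2_two_mul (a : ℕ) : w2 (2 * a) = w2 a := by
  rcases Nat.eq_zero_or_pos a with h | h
  · simp [h]
  · unfold w2
    rw [Nat.digits_def' (by norm_num : (1:ℕ) < 2) (by omega)]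
    simp

lemma w2_two_mul_add_one (a : ℕ) : w2 (2 * a + 1) = w2 a + 1 := by
  unfold w2
  rw [Nat.digits_def' (by norm_num : (1:ℕ) < 2) (by omega)]
  have h1 : (2 * a + 1) % 2 = 1 := by omega
  have h2 : (2 * a + 1) / 2 = a := by omega
  rw [h1, h2]
  simp [Nat.add_comm]

lemma w2_compl (k : ℕ) : ∀ x y : ℕ, x + y = 2 ^ k - 1 → w2 x + w2 y = k := by
  induction k with
  | zero =>
    intro x y h
    simp only [pow_zero] at h
    have hx : x = 0 := by omega
    have hy : y = 0 := by omega
    simp [hx, hy, w2]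
  | succ k ih =>
    intro x y h
    have hp : 0 < 2 ^ k := (Nat.pow_pos (by norm_num) : 0 < 2 ^ k)
    have h2 : 2 ^ (k + 1) = 2 * 2 ^ k := by ring
    rcases Nat.even_or_odd x with hx | hx
    · obtain ⟨x0, hx0⟩ := hx
      have hx0' : x = 2 * x0 := by omega
      have hy0' : y = 2 * (y / 2) + 1 := by omega
      set y0 := y / 2 with hy0
      have hxy : x0 + y0 = 2 ^ k - 1 := by omega
      rw [hx0', hy0', w2_two_mul, w2_two_mul_add_one]
      have := ih x0 y0 hxy
      omega
    · obtain ⟨x0, hx0⟩ := hx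
      have hy0' : y = 2 * (y / 2) := by omega
      set y0 := y / 2 with hy0
      have hxy : x0 + y0 = 2 ^ k - 1 := by omega
      rw [hx0, hy0', w2_two_mul, w2_two_mul_add_one]
      have := ih x0 y0 hxy
      omega

lemma sigma_lt (n : ℕ) (a : ℕ → ℕ) (h : ∀ l, a l ≤ 1) : sigma n a < 2 ^ n := by
  induction n with
  | zero => simp [sigma]
  | succ m ih =>
    unfold sigma at *
    rw [Finset.sum_range_succ]
    have h1 : a m * 2 ^ m ≤ 2 ^ m := by
      have := h m
      nlinarith [(Nat.pow_pos (show 0 < 2 by norm_num) : 0 < 2 ^ m)]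
    have h2 : 2 ^ (m + 1) = 2 * 2 ^ m := by ring
    omega

lemma sigma_eq (m : ℕ) (f : ℕ → ℕ) :
    sigma (m + 1) f = 2 * (∑ l ∈ Finset.range m, f (l + 1) * 2 ^ l) + f 0 := by
  unfold sigma
  rw [Finset.sum_range_succ']
  simp only [pow_zero, mul_one, Finset.mul_sum]
  congr 1
  apply Finset.sum_congr rfl
  intro l _
  rw [pow_succ]
  ring

lemma sigma_shift (n : ℕ) (hn : 1 ≤ n) (a : ℕ → ℕ) (hper : ∀ l, a (l + n) = a l) (t : ℕ) :
    2 * sigma n (fun l => a (l + (t + 1))) = sigma n (fun l => a (l + t)) + a t * (2 ^ n - 1) := by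
  obtain ⟨m, rfl⟩ : ∃ m, n = m + 1 := ⟨n - 1, by omega⟩
  have h1 : sigma (m + 1) (fun l => a (l + t))
      = 2 * (∑ l ∈ Finset.range m, a (l + 1 + t) * 2 ^ l) + a (0 + t) :=
    sigma_eq m _
  rw [Nat.zero_add] at h1
  have hm : a (m + (t + 1)) = a t := by
    have h : m + (t + 1) = t + (m + 1) := by omega
    rw [h, hper t]
  have h2 : sigma (m + 1) (fun l => a (l + (t + 1)))
      = (∑ l ∈ Finset.range m, a (l + 1 + t) * 2 ^ l) + a t * 2 ^ m := by
    unfold sigma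
    simp only [Finset.sum_range_succ]
    rw [hm]
    congr 1
    apply Finset.sum_congr rfl
    intro l _
    have h : l + (t + 1) = l + 1 + t := by omega
    rw [h]
  rw [h1, h2]
  have hp : 0 < 2 ^ m := (Nat.pow_pos (by norm_num) : 0 < 2 ^ m)
  have h3 : 2 ^ (m + 1) = 2 * 2 ^ m := by ring
  have h4 : a t * (2 ^ (m + 1) - 1) = a t * 2 ^ (m + 1) - a t := by
    rw [Nat.mul_sub, mul_one]
  have h5 : a t * 2 ^ (m + 1) = 2 * (a t * 2 ^ m) := by rw [h3]; ring
  have h6 : a t ≤ a t * 2 ^ (m + 1) :=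
    Nat.le_mul_of_pos_right (a t) (by positivity)
  omega

lemma sigma_parity (n : ℕ) (hn : 1 ≤ n) (f : ℕ → ℕ) (hf : f 0 ≤ 1) :
    sigma n f % 2 = f 0 := by
  obtain ⟨m, rfl⟩ : ∃ m, n = m + 1 := ⟨n - 1, by omega⟩
  rw [sigma_eq]
  omega

/-- The key arithmetic step. -/
lemma step (n A B A' B' x y : ℕ) (hn : 1 ≤ n) (hA : A < 2 ^ n) (hB : B < 2 ^ n)
    (h2A : 2 * A' = A + x * (2 ^ n - 1)) (h2B : 2 * B' = B + y * (2 ^ n - 1))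
    (hAx : A % 2 = x) (hBy : B % 2 = y) (hx : x ≤ 1) (hy : y ≤ 1) :
    ((if A' > B' then (n : ℤ) - 2 * w2 (A' - B') else 2 * w2 (B' - A') - n)
    = if A > B then (n : ℤ) - 2 * w2 (A - B) else 2 * w2 (B - A) - n) := by
  have hp : 0 < 2 ^ n := (Nat.pow_pos (by norm_num) : 0 < 2 ^ n)
  have h2n : 2 ^ n = 2 * 2 ^ (n - 1) := by
    rw [← pow_succ']
    congr 1
    omega
  interval_cases x <;> interval_cases y
  · -- x = 0, y = 0 : differences halve
    have hAB : A - B = 2 * (A' - B') := by omega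
    have hBA : B - A = 2 * (B' - A') := by omega
    have hiff : A' > B' ↔ A > B := by omega
    by_cases h : A > B
    · rw [if_pos h, if_pos (hiff.mpr h), hAB, w2_two_mul]
    · rw [if_neg h, if_neg (fun h' => h (hiff.mp h')), hBA, w2_two_mul]
  · -- x = 0, y = 1 : B odd, A even
    by_cases h : B > A
    · -- B' > A' as well
      have hgt : B' > A' := by omega
      have hne : ¬ A' > B' := by omega
      rw [if_neg hne, if_neg (by omega)]
      have hd : B - A = 2 * (B' - A') - (2 ^ n - 1) := by omega
      -- d = B - A odd, d ≤ 2^n - 1; d' = B' - A'; 2d' = d + 2^n - 1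
      set d := B - A with hdd
      set d' := B' - A' with hdd'
      have h2d : 2 * d' = d + (2 ^ n - 1) := by omega
      -- complement of d
      have hdodd : d % 2 = 1 := by omega
      have hdle : d ≤ 2 ^ n - 1 := by omega
      obtain ⟨c, hc⟩ : ∃ c, 2 * c = 2 ^ n - 1 - d := ⟨(2 ^ n - 1 - d) / 2, by omega⟩
      have e1 : d + 2 * c = 2 ^ n - 1 := by omega
      have e2 : d' + c = 2 ^ n - 1 := by omega
      have w1 := w2_compl n d (2 * c) e1
      have w2' := w2_compl n d' c e2
      rw [w2_two_mul] at w1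
      have : w2 d' = w2 d := by omega
      rw [this]
    · -- A > B (B odd, A even, so A ≠ B); still B' > A'
      have hBltA : B < A := by omega
      set e := A - B with hee
      have heodd : e % 2 = 1 := by omega
      have hB1 : 1 ≤ B := by omega
      have hele : e ≤ 2 ^ n - 2 := by omega
      have hgt : B' > A' := by omega
      rw [if_neg (by omega), if_pos (by omega)]
      set d' := B' - A' with hdd'
      have h2d : 2 * d' = 2 ^ n - 1 - e := by omega
      obtain ⟨e'', he''⟩ : ∃ e'', e = 2 * e'' + 1 := ⟨e / 2, by omega⟩
      have hw : w2 e = w2 e'' + 1 := by rw [he'', w2_two_mul_add_one]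
      have ecomp : d' + e'' = 2 ^ (n - 1) - 1 := by omega
      have w1 := w2_compl (n - 1) d' e'' ecomp
      rw [hw]
      push_cast
      omega
  · -- impossible-sign analysis mirrored: x = 1, y = 0 : A odd, B even
    by_cases h : A > B
    · have hgt : A' > B' := by omega
      rw [if_pos hgt, if_pos h]
      set d := A - B with hdd
      set d' := A' - B' with hdd'
      have h2d : 2 * d' = d + (2 ^ n - 1) := by omega
      have hdodd : d % 2 = 1 := by omega
      have hdle : d ≤ 2 ^ n - 1 := by omega
      obtain ⟨c, hc⟩ : ∃ c, 2 * c = 2 ^ n - 1 - d := ⟨(2 ^ n - 1 - d) / 2, by omega⟩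
      have e1 : d + 2 * c = 2 ^ n - 1 := by omega
      have e2 : d' + c = 2 ^ n - 1 := by omega
      have w1 := w2_compl n d (2 * c) e1
      have w2' := w2_compl n d' c e2
      rw [w2_two_mul] at w1
      have : w2 d' = w2 d := by omega
      rw [this]
    · -- A < B (A odd, B even, so A ≠ B); still A' > B'
      have hAltB : A < B := by omega
      set e := B - A with hee
      have heodd : e % 2 = 1 := by omega
      have hA1 : 1 ≤ A := by omega
      have hele : e ≤ 2 ^ n - 2 := by omega
      have hgt : A' > B' := by omega
      rw [if_pos hgt, if_neg h]
      set d' := A' - B' with hdd'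
      have h2d : 2 * d' = 2 ^ n - 1 - e := by omega
      obtain ⟨e'', he''⟩ : ∃ e'', e = 2 * e'' + 1 := ⟨e / 2, by omega⟩
      have hw : w2 e = w2 e'' + 1 := by rw [he'', w2_two_mul_add_one]
      have ecomp : d' + e'' = 2 ^ (n - 1) - 1 := by omega
      have w1 := w2_compl (n - 1) d' e'' ecomp
      rw [hw]
      push_cast
      omega
  · -- x = 1, y = 1 : differences halve
    have hAB : A - B = 2 * (A' - B') := by omega
    have hBA : B - A = 2 * (B' - A') := by omega
    have hiff : A' > B' ↔ A > B := by omega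
    by_cases h : A > B
    · rw [if_pos h, if_pos (hiff.mpr h), hAB, w2_two_mul]
    · rw [if_neg h, if_neg (fun h' => h (hiff.mp h')), hBA, w2_two_mul]

lemma AM_step (n : ℕ) (hn : 1 ≤ n) (a b : ℕ → ℕ)
    (hbina : ∀ l, a l ≤ 1) (hbinb : ∀ l, b l ≤ 1)
    (hpera : ∀ l, a (l + n) = a l) (hperb : ∀ l, b (l + n) = b l) (t : ℕ) :
    AM n a b (t + 1) = AM n a b t := by
  unfold AM
  exact step n (sigma n (fun l => a (l + t))) (sigma n (fun l => b (l + t)))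
    (sigma n (fun l => a (l + (t + 1)))) (sigma n (fun l => b (l + (t + 1))))
    (a t) (b t) hn
    (sigma_lt n _ (fun l => hbina _)) (sigma_lt n _ (fun l => hbinb _))
    (sigma_shift n hn a hpera t) (sigma_shift n hn b hperb t)
    (by simpa using sigma_parity n hn (fun l => a (l + t)) (by simpa using hbina t))
    (by simpa using sigma_parity n hn (fun l => b (l + t)) (by simpa using hbinb t))
    (hbina t) (hbinb t)

theorem AM_shift_invariant (n : ℕ) (hn : 2 ≤ n) (a b : ℕ → ℕ)
    (hbina : ∀ l, a l ≤ 1) (hbinb : ∀ l, b l ≤ 1)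
    (hpera : ∀ l, a (l + n) = a l) (hperb : ∀ l, b (l + n) = b l)
    (hne : ∃ l < n, a l ≠ b l)
    (t : ℕ) (ht : t ≤ n - 1) :
    AM n a b t = AM n a b 0 := by
  induction t with
  | zero => rfl
  | succ s ih =>
    rw [AM_step n (by omega) a b hbina hbinb hpera hperb s]
    exact ih (by omega)
end
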